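/- For every integer k ≥ 2, ẽ⁽¹⁾ₖ * τₖ = 0 in ℚ[Sₖ]; explicitly, Σ_{σ∈Sₖ} aₖ^{1, des(σ)+1}·στₖσ⁻¹ = 0. -/

import Mathlib

noncomputable section

/-- Number of descents of a permutation of `Fin n`. -/
def descents {n : ℕ} (σ : Equiv.Perm (Fin n)) : ℕ :=
  (Finset.univ.filter fun p : Fin n × Fin n =>
    (p.2 : ℕ) = (p.1 : ℕ) + 1 ∧ σ p.2 < σ p.1).card

/-- `aCoeff n l j` is the coefficient of `X^l` in `(1/n!) ∏_{i=1}^n (X - j + i) ∈ ℚ[X]`. -/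
def aCoeff (n l j : ℕ) : ℚ :=
  (((n.factorial : ℚ))⁻¹ • ∏ i ∈ Finset.Icc 1 n,
    (Polynomial.X + Polynomial.C ((i : ℚ) - (j : ℚ)))).coeff l

/-- The `k`-cycle `τₖ` sending `1 ↦ k` and `i ↦ i-1` for `2 ≤ i ≤ k`. -/
def tau (k : ℕ) : Equiv.Perm (Fin k) := (finRotate k)⁻¹

open Polynomial Finset
open scoped Fin.NatCast Fin.CommRing

/-! ### The coefficient identity -/

lemma Icc_prod_eq (k : ℕ) (f : ℕ → ℚ[X]) :
    ∏ i ∈ Finset.Icc 1 k, f i = ∏ i ∈ Finset.range k, f (1 + i) := by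
  rw [← Finset.Ico_add_one_right_eq_Icc, Finset.prod_Ico_eq_prod_range]
  simp

lemma prodP_eq (k j : ℕ) :
    (∏ i ∈ Finset.Icc 1 k, (X + C ((i : ℚ) - (j : ℚ)))) * (X + C (0 - (j:ℚ)))
      = (∏ i ∈ Finset.Icc 1 k, (X + C ((i : ℚ) - ((j+1 : ℕ) : ℚ)))) * (X + C ((k:ℚ) - j)) := by
  rw [Icc_prod_eq, Icc_prod_eq]
  have h1 : (∏ i ∈ Finset.range k, (X + C (((1+i:ℕ):ℚ) - j))) * (X + C (0 - (j:ℚ)))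
      = ∏ i ∈ Finset.range (k+1), (X + C ((i:ℚ) - j)) := by
    rw [Finset.prod_range_succ']
    congr 1
    exact Finset.prod_congr rfl fun x _ => by push_cast; ring_nf
  have h2 : (∏ i ∈ Finset.range k, (X + C (((1+i:ℕ):ℚ) - ((j+1:ℕ):ℚ)))) * (X + C ((k:ℚ) - j))
      = ∏ i ∈ Finset.range (k+1), (X + C ((i:ℚ) - j)) := by
    rw [Finset.prod_range_succ]
    congr 1
    exact Finset.prod_congr rfl fun x _ => by congr 1; push_cast; ring
  exact h1.trans h2.symm

lemma coeff_mul_linear (P : ℚ[X]) (c : ℚ) :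
    (P * (X + C c)).coeff 1 = P.coeff 0 + c * P.coeff 1 := by
  rw [mul_add, Polynomial.coeff_add, Polynomial.coeff_mul_X]
  congr 1
  rw [mul_comm, Polynomial.coeff_C_mul]

lemma coeffP_zero (k j : ℕ) (h1 : 1 ≤ j) (h2 : j ≤ k) :
    (∏ i ∈ Finset.Icc 1 k, (X + C ((i : ℚ) - (j : ℚ)))).coeff 0 = 0 := by
  rw [Polynomial.coeff_zero_eq_eval_zero, Polynomial.eval_prod]
  apply Finset.prod_eq_zero (Finset.mem_Icc.mpr ⟨h1, h2⟩)
  simp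

lemma lemB (k j : ℕ) (h1 : 1 ≤ j) (h2 : j < k) :
    (j:ℚ) * aCoeff k 1 j + ((k:ℚ) - j) * aCoeff k 1 (j+1) = 0 := by
  have key := congrArg (fun P : ℚ[X] => P.coeff 1) (prodP_eq k j)
  simp only [coeff_mul_linear] at key
  rw [coeffP_zero k j h1 h2.le, coeffP_zero k (j+1) (by omega) (by omega)] at key
  unfold aCoeff
  rw [Polynomial.coeff_smul, Polynomial.coeff_smul]
  simp only [smul_eq_mul]
  linear_combination (-(k.factorial:ℚ)⁻¹) * key

/-! ### Combinatorics of descents under rotation -/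

lemma tau_apply (n : ℕ) (i : Fin (n+1)) : tau (n+1) i = i - 1 := by
  have : finRotate (n+1) (i - 1) = i := by
    rw [finRotate_succ_apply, sub_add_cancel]
  unfold tau
  exact (Equiv.Perm.inv_eq_iff_eq).mpr this.symm

lemma tau_pow_apply (n m : ℕ) (i : Fin (n+1)) :
    ((tau (n+1)) ^ m) i = i - (m : Fin (n+1)) := by
  induction m with
  | zero => simp
  | succ m ih =>
    rw [pow_succ', Equiv.Perm.mul_apply, ih, tau_apply]
    push_cast
    ring

lemma descents_eq_sum (n : ℕ) (ρ : Equiv.Perm (Fin (n+2))) :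
    descents ρ = ∑ i : Fin (n+1),
      (if ρ (i.castSucc + 1) < ρ i.castSucc then 1 else 0) := by
  unfold descents
  rw [Finset.card_filter]
  rw [Fintype.sum_prod_type]
  rw [Fin.sum_univ_castSucc]
  have hlast : (∑ j : Fin (n+2), if ((j : ℕ) = ((Fin.last (n+1) : Fin (n+2)) : ℕ) + 1 ∧ ρ j < ρ (Fin.last (n+1))) then 1 else 0) = 0 := by
    apply Finset.sum_eq_zero
    intro j _
    rw [if_neg]
    rintro ⟨h, -⟩
    simp only [Fin.val_last] at h
    omega
  rw [hlast, add_zero]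
  apply Finset.sum_congr rfl
  intro i _
  have hcast : ((i.castSucc + 1 : Fin (n+2)) : ℕ) = (i : ℕ) + 1 := by
    apply Fin.val_add_one_of_lt
    exact Fin.castSucc_lt_last i
  rw [Finset.sum_eq_single (i.castSucc + 1)]
  · simp [hcast]
  · intro j _ hj
    rw [if_neg]
    rintro ⟨h, -⟩
    apply hj
    apply Fin.ext
    rw [hcast]
    simpa using h
  · intro h; exact absurd (Finset.mem_univ _) h

lemma des_rot (n : ℕ) (σ : Equiv.Perm (Fin (n+2))) (t : Fin (n+2)) :
    descents (σ * Equiv.subRight t)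
      + (if σ (Fin.last (n+1) - t + 1) < σ (Fin.last (n+1) - t) then 1 else 0)
      = ∑ j : Fin (n+2), (if σ (j + 1) < σ j then 1 else 0) := by
  have hre : ∑ j : Fin (n+2), (if σ (j + 1) < σ j then 1 else 0)
      = ∑ i : Fin (n+2), (if σ ((i - t) + 1) < σ (i - t) then 1 else 0) := by
    exact (Fintype.sum_equiv (Equiv.subRight t) _ _ (fun i => by simp)).symm
  rw [hre, Fin.sum_univ_castSucc, descents_eq_sum]
  congr 1
  apply Finset.sum_congr rfl
  intro i _
  have h1 : (σ * Equiv.subRight t) (i.castSucc + 1) = σ ((i.castSucc - t) + 1) := by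
    simp only [Equiv.Perm.mul_apply, Equiv.subRight_apply]
    congr 1
    ring
  have h2 : (σ * Equiv.subRight t) i.castSucc = σ (i.castSucc - t) := rfl
  rw [h1, h2]

lemma cdes_bounds (n : ℕ) (σ : Equiv.Perm (Fin (n+2))) :
    1 ≤ (Finset.univ.filter fun j : Fin (n+2) => σ (j+1) < σ j).card ∧
    (Finset.univ.filter fun j : Fin (n+2) => σ (j+1) < σ j).card ≤ n + 1 := by
  constructor
  · rw [Nat.one_le_iff_ne_zero, Finset.card_ne_zero]
    refine ⟨σ⁻¹ (Fin.last (n+1)), Finset.mem_filter.mpr ⟨Finset.mem_univ _, ?_⟩⟩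
    have h0 : σ (σ⁻¹ (Fin.last (n+1))) = Fin.last (n+1) := Equiv.apply_symm_apply σ _
    rw [h0]
    refine lt_of_le_of_ne (Fin.le_last _) fun h => ?_
    have := σ.injective (h.trans h0.symm)
    have h1 : (1 : Fin (n+2)) ≠ 0 := one_ne_zero
    exact h1 (add_eq_left.mp this)
  · have hsub : (Finset.univ.filter fun j : Fin (n+2) => σ (j+1) < σ j)
        ⊆ Finset.univ.erase (σ⁻¹ 0) := by
      intro j hj
      rw [Finset.mem_erase]
      refine ⟨fun h => ?_, Finset.mem_univ _⟩
      have : σ j = 0 := by rw [h]; exact Equiv.apply_symm_apply σ _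
      have h2 := (Finset.mem_filter.mp hj).2
      rw [this] at h2
      exact Fin.not_lt_zero _ h2
    have := Finset.card_le_card hsub
    rwa [Finset.card_erase_of_mem (Finset.mem_univ _), Finset.card_univ, Fintype.card_fin] at this

/-! ### The cyclic sum lemma -/

lemma sumA (n : ℕ) (σ : Equiv.Perm (Fin (n+2))) :
    ∑ m ∈ Finset.range (n+2), aCoeff (n+2) 1 (descents (σ * (tau (n+2))^m) + 1) = 0 := by
  set d := (Finset.univ.filter fun j : Fin (n+2) => σ (j+1) < σ j).card with hd
  obtain ⟨hd1, hd2⟩ := cdes_bounds n σ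
  have hcard : ∑ j : Fin (n+2), (if σ (j + 1) < σ j then 1 else 0) = d :=
    (Finset.card_filter _ _).symm
  have hterm : ∀ m : ℕ, aCoeff (n+2) 1 (descents (σ * (tau (n+2))^m) + 1)
      = if σ (Fin.last (n+1) - (m : Fin (n+2)) + 1) < σ (Fin.last (n+1) - (m : Fin (n+2)))
        then aCoeff (n+2) 1 d else aCoeff (n+2) 1 (d+1) := by
    intro m
    have hperm : σ * (tau (n+2))^m = σ * Equiv.subRight ((m : Fin (n+2))) := by
      congr 1
      ext i
      rw [tau_pow_apply (n+1) m i]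
      rfl
    have h := des_rot n σ (m : Fin (n+2))
    rw [← hperm, hcard] at h
    split_ifs with hcond
    · have h' : descents (σ * tau (n+2) ^ m) + 1 = d := by
        rw [if_pos hcond] at h
        omega
      rw [h']
    · have h' : descents (σ * tau (n+2) ^ m) + 1 = d + 1 := by
        rw [if_neg hcond] at h
        omega
      rw [h']
  rw [Finset.sum_congr rfl (fun m _ => hterm m)]
  have hfin : ∑ m ∈ Finset.range (n+2),
      (if σ (Fin.last (n+1) - (m : Fin (n+2)) + 1) < σ (Fin.last (n+1) - (m : Fin (n+2)))
        then aCoeff (n+2) 1 d else aCoeff (n+2) 1 (d+1))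
      = ∑ t : Fin (n+2),
      (if σ (Fin.last (n+1) - t + 1) < σ (Fin.last (n+1) - t)
        then aCoeff (n+2) 1 d else aCoeff (n+2) 1 (d+1)) := by
    rw [← Fin.sum_univ_eq_sum_range]
    apply Finset.sum_congr rfl
    intro t _
    rw [Fin.cast_val_eq_self]
  rw [hfin]
  have hre : ∑ t : Fin (n+2),
      (if σ (Fin.last (n+1) - t + 1) < σ (Fin.last (n+1) - t)
        then aCoeff (n+2) 1 d else aCoeff (n+2) 1 (d+1))
      = ∑ j : Fin (n+2),
      (if σ (j + 1) < σ j then aCoeff (n+2) 1 d else aCoeff (n+2) 1 (d+1)) := by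
    refine Fintype.sum_equiv (Equiv.subLeft (Fin.last (n+1))) _ _ fun j => ?_
    rfl
  rw [hre, Finset.sum_ite, Finset.sum_const, Finset.sum_const, ← hd]
  have hneg : (Finset.univ.filter fun j : Fin (n+2) => ¬ σ (j+1) < σ j).card = (n+2) - d := by
    have := Finset.card_filter_add_card_filter_not
      (s := (Finset.univ : Finset (Fin (n+2)))) (p := fun j => σ (j+1) < σ j)
    rw [Finset.card_univ, Fintype.card_fin] at this
    omega
  rw [hneg]
  have hcast : ((n+2-d : ℕ) : ℚ) = ((n+2 : ℕ) : ℚ) - d := by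
    push_cast [Nat.cast_sub (by omega : d ≤ n+2)]
    ring
  rw [nsmul_eq_mul, nsmul_eq_mul, hcast]
  have := lemB (n+2) d hd1 (by omega)
  push_cast at this ⊢
  linarith [this]

/-! ### Main theorem -/

/-- `ẽ⁽¹⁾ₖ * τₖ = 0` in `ℚ[Sₖ]`:
`Σ_{σ∈Sₖ} aₖ^{1, des(σ)+1}·στₖσ⁻¹ = 0`. -/
theorem eulerian_one_conj_tau_eq_zero (k : ℕ) (hk : 2 ≤ k) :
    ∑ σ : Equiv.Perm (Fin k),
      MonoidAlgebra.single (σ * tau k * σ⁻¹) (aCoeff k 1 (descents σ + 1)) = 0 := by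
  obtain ⟨n, rfl⟩ : ∃ n, k = n + 2 := ⟨k - 2, by omega⟩
  set S := ∑ σ : Equiv.Perm (Fin (n+2)),
      MonoidAlgebra.single (σ * tau (n+2) * σ⁻¹) (aCoeff (n+2) 1 (descents σ + 1)) with hS
  have hm : ∀ m : ℕ, S = ∑ σ : Equiv.Perm (Fin (n+2)),
      MonoidAlgebra.single (σ * tau (n+2) * σ⁻¹)
        (aCoeff (n+2) 1 (descents (σ * (tau (n+2))^m) + 1)) := by
    intro m
    rw [hS]
    refine (Fintype.sum_equiv (Equiv.mulRight ((tau (n+2))^m)) _ _ fun ρ => ?_).symm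
    have hconj : (ρ * (tau (n+2))^m) * tau (n+2) * (ρ * (tau (n+2))^m)⁻¹
        = ρ * tau (n+2) * ρ⁻¹ := by group
    simp only [Equiv.coe_mulRight]
    rw [hconj]
  have hzero : (n+2) • S = 0 := by
    calc (n+2) • S = ∑ _m ∈ Finset.range (n+2), S := by
          rw [Finset.sum_const, Finset.card_range]
      _ = ∑ m ∈ Finset.range (n+2), ∑ σ : Equiv.Perm (Fin (n+2)),
          MonoidAlgebra.single (σ * tau (n+2) * σ⁻¹)
            (aCoeff (n+2) 1 (descents (σ * (tau (n+2))^m) + 1)) :=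
          Finset.sum_congr rfl fun m _ => hm m
      _ = ∑ σ : Equiv.Perm (Fin (n+2)), ∑ m ∈ Finset.range (n+2),
          MonoidAlgebra.single (σ * tau (n+2) * σ⁻¹)
            (aCoeff (n+2) 1 (descents (σ * (tau (n+2))^m) + 1)) := Finset.sum_comm
      _ = ∑ σ : Equiv.Perm (Fin (n+2)),
          MonoidAlgebra.single (σ * tau (n+2) * σ⁻¹)
            (∑ m ∈ Finset.range (n+2), aCoeff (n+2) 1 (descents (σ * (tau (n+2))^m) + 1)) := by
          refine Finset.sum_congr rfl fun σ _ => ?_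
          exact (map_sum (MonoidAlgebra.singleAddHom (σ * tau (n+2) * σ⁻¹)) _ _).symm
      _ = 0 := by
          refine Finset.sum_eq_zero fun σ _ => ?_
          rw [sumA n σ]
          exact MonoidAlgebra.single_zero _
  have hk0 : (((n+2 : ℕ)) : ℚ) ≠ 0 := by positivity
  have hsm : (((n+2 : ℕ)) : ℚ) • S = 0 := by
    rw [Nat.cast_smul_eq_nsmul]
    exact hzero
  exact (smul_eq_zero.mp hsm).resolve_left hk0

end
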